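/- For any hypergraph H and any i, n ≥ 0, the relative embedded homology of the skeleton pair satisfies H_i(H^n, H^{n-1}) = 0 if i ≠ n, and H_n(H^n, H^{n-1}) ≅ Inf_n(H). -/
import Mathlib


/-- Oriented `n`-simplices on a vertex set `V`: finsets of cardinality `n+1`. -/
abbrev Simp (V : Type) (n : ℕ) : Type := {σ : Finset V // σ.card = n + 1}

/-- The group of `n`-chains with coefficients in `G` on the full simplex on `V`. -/
abbrev Ch (V : Type) (G : Type) [AddCommGroup G] (n : ℕ) : Type := Simp V n →₀ G

/-- Boundary of a single `(n+1)`-simplex with coefficient `g`. -/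
noncomputable def bdryFun (V : Type) [LinearOrder V] (G : Type) [AddCommGroup G]
    (n : ℕ) (σ : Simp V (n + 1)) (g : G) : Ch V G n :=
  ∑ v ∈ σ.1.attach, Finsupp.single
    ⟨σ.1.erase v.1, by rw [Finset.card_erase_of_mem v.2, σ.2]; omega⟩
    (((-1 : ℤ) ^ ((σ.1.filter fun w => w < v.1).card)) • g)

/-- The simplicial boundary homomorphism `C_{n+1} → C_n`. -/
noncomputable def bdry (V : Type) [LinearOrder V] (G : Type) [AddCommGroup G]
    (n : ℕ) : Ch V G (n + 1) →+ Ch V G n :=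
  Finsupp.liftAddHom fun σ =>
    { toFun := bdryFun V G n σ
      map_zero' := by simp [bdryFun]
      map_add' := fun a b => by
        simp [bdryFun, smul_add, Finsupp.single_add, Finset.sum_add_distrib] }

/-- The subgroup `G(K)_n ⊆ C_n` of chains supported on the `n`-hyperedges of `K`. -/
def chainsOn (V : Type) [LinearOrder V] (G : Type) [AddCommGroup G]
    (K : Set (Finset V)) (n : ℕ) : AddSubgroup (Ch V G n) where
  carrier := {c | ∀ σ ∈ c.support, (σ : Simp V n).1 ∈ K}
  zero_mem' := by simp
  add_mem' := by
    intro a b ha hb σ hσ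
    rcases Finset.mem_union.mp (Finsupp.support_add hσ) with h | h
    exacts [ha σ h, hb σ h]
  neg_mem' := by
    intro a ha σ hσ
    exact ha σ (by simpa using hσ)

section Generic

variable {C : ℕ → Type} [∀ n, AddCommGroup (C n)]

/-- The infimum chain complex of a graded subgroup `D` inside `(C, d)`. -/
def InfC (d : ∀ n, C (n + 1) →+ C n) (D : ∀ n, AddSubgroup (C n)) :
    ∀ n, AddSubgroup (C n)
  | 0 => D 0
  | (n + 1) => D (n + 1) ⊓ (D n).comap (d n)

/-- The supremum chain complex of a graded subgroup `D` inside `(C, d)`. -/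
def SupC (d : ∀ n, C (n + 1) →+ C n) (D : ∀ n, AddSubgroup (C n)) (n : ℕ) :
    AddSubgroup (C n) :=
  D n ⊔ (D (n + 1)).map (d n)

/-- Relative cycles of the pair of graded subgroups `(K, L)`. -/
def relZ (d : ∀ n, C (n + 1) →+ C n) (K L : ∀ n, AddSubgroup (C n)) :
    ∀ n, AddSubgroup (C n)
  | 0 => K 0
  | (n + 1) => K (n + 1) ⊓ (L n).comap (d n)

/-- Relative boundaries of the pair of graded subgroups `(K, L)`. -/
def relB (d : ∀ n, C (n + 1) →+ C n) (K L : ∀ n, AddSubgroup (C n)) (n : ℕ) :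
    AddSubgroup (C n) :=
  ((K (n + 1)).map (d n) ⊔ L n) ⊓ relZ d K L n

/-- Relative homology of the pair `(K, L)`, i.e. the homology of the quotient chain
complex `K/L`.  (Taking `L = ⊥` gives the absolute homology of `K`.) -/
abbrev relH (d : ∀ n, C (n + 1) →+ C n) (K L : ∀ n, AddSubgroup (C n)) (n : ℕ) : Type _ :=
  relZ d K L n ⧸ (relB d K L n).addSubgroupOf (relZ d K L n)

theorem relZ_mono (d : ∀ n, C (n + 1) →+ C n) {K L K' L' : ∀ n, AddSubgroup (C n)}
    (hK : ∀ n, K n ≤ K' n) (hL : ∀ n, L n ≤ L' n) :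
    ∀ n, relZ d K L n ≤ relZ d K' L' n
  | 0 => hK 0
  | (n + 1) => inf_le_inf (hK (n + 1)) (AddSubgroup.comap_mono (hL n))

theorem relB_mono (d : ∀ n, C (n + 1) →+ C n) {K L K' L' : ∀ n, AddSubgroup (C n)}
    (hK : ∀ n, K n ≤ K' n) (hL : ∀ n, L n ≤ L' n) (n : ℕ) :
    relB d K L n ≤ relB d K' L' n :=
  inf_le_inf (sup_le_sup (AddSubgroup.map_mono (hK (n + 1))) (hL n))
    (relZ_mono d hK hL n)

/-- The map on relative homology induced by an inclusion of pairs. -/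
noncomputable def inducedRelMap (d : ∀ n, C (n + 1) →+ C n)
    {K L K' L' : ∀ n, AddSubgroup (C n)}
    (hK : ∀ n, K n ≤ K' n) (hL : ∀ n, L n ≤ L' n) (n : ℕ) :
    relH d K L n →+ relH d K' L' n :=
  QuotientAddGroup.map _ _ (AddSubgroup.inclusion (relZ_mono d hK hL n)) (by
    intro x hx
    simp only [AddSubgroup.mem_comap, AddSubgroup.mem_addSubgroupOf,
      AddSubgroup.coe_inclusion] at hx ⊢
    exact relB_mono d hK hL n hx)

theorem InfC_le_SupC (d : ∀ n, C (n + 1) →+ C n) (D : ∀ n, AddSubgroup (C n)) :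
    ∀ n, InfC d D n ≤ SupC d D n := by
  intro n
  cases n with
  | zero => exact le_sup_left
  | succ n => exact le_trans inf_le_left le_sup_left

theorem InfC_mono (d : ∀ n, C (n + 1) →+ C n) {D D' : ∀ n, AddSubgroup (C n)}
    (h : ∀ n, D n ≤ D' n) : ∀ n, InfC d D n ≤ InfC d D' n
  | 0 => h 0
  | (n + 1) => inf_le_inf (h (n + 1)) (AddSubgroup.comap_mono (h n))

end Generic

theorem chainsOn_mono (V : Type) [LinearOrder V] (G : Type) [AddCommGroup G]
    {K K' : Set (Finset V)} (h : K ⊆ K') (n : ℕ) :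
    chainsOn V G K n ≤ chainsOn V G K' n := by
  intro c hc σ hσ
  exact h (hc σ hσ)

/-- The `k`-th "skeleton by cardinality": hyperedges of `H` with at most `k` vertices
(i.e. of dimension at most `k - 1`).  The `n`-skeleton `H^n` of the paper is
`skel H (n + 1)`. -/
def skel (H : Set (Finset V)) (k : ℕ) : Set (Finset V) := {σ ∈ H | σ.card ≤ k}


section DD

variable (V : Type) [LinearOrder V] (G : Type) [AddCommGroup G]

theorem bdry_apply_single (n : ℕ) (σ : Simp V (n + 1)) (g : G) :
    bdry V G n (Finsupp.single σ g) = bdryFun V G n σ g :=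
  Finsupp.liftAddHom_apply_single _ _ _

/-- Auxiliary double-boundary term. -/
noncomputable def ddTerm (n : ℕ) (σ : Simp V (n + 2)) (g : G) (p : V × V) : Ch V G n :=
  if h : p.1 ∈ σ.1 ∧ p.2 ∈ σ.1.erase p.1 then
    Finsupp.single
      ⟨(σ.1.erase p.1).erase p.2, by
        rw [Finset.card_erase_of_mem h.2, Finset.card_erase_of_mem h.1, σ.2]; omega⟩
      (((-1 : ℤ) ^ (((σ.1.erase p.1).filter fun w => w < p.2).card)) •
        (((-1 : ℤ) ^ ((σ.1.filter fun w => w < p.1).card)) • g))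
  else 0

theorem ddTerm_diag (n : ℕ) (σ : Simp V (n + 2)) (g : G) (a : V) :
    ddTerm V G n σ g (a, a) = 0 := by
  unfold ddTerm
  rw [dif_neg]
  rintro ⟨-, h⟩
  exact Finset.notMem_erase a σ.1 h

theorem single_cancel (n : ℕ) (s : Finset V) (a b : V)
    (h₁ : ((s.erase a).erase b).card = n + 1) (h₂ : ((s.erase b).erase a).card = n + 1)
    (x y : G) (hxy : x + y = 0) :
    Finsupp.single (⟨(s.erase a).erase b, h₁⟩ : Simp V n) x +
      Finsupp.single (⟨(s.erase b).erase a, h₂⟩ : Simp V n) y = 0 := by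
  have h : (⟨(s.erase b).erase a, h₂⟩ : Simp V n) = ⟨(s.erase a).erase b, h₁⟩ :=
    Subtype.ext Finset.erase_right_comm
  rw [h, ← Finsupp.single_add, hxy, Finsupp.single_zero]

theorem ddTerm_cancel (n : ℕ) (σ : Simp V (n + 2)) (g : G) {a b : V}
    (hab : a < b) (ha : a ∈ σ.1) (hb : b ∈ σ.1) :
    ddTerm V G n σ g (a, b) + ddTerm V G n σ g (b, a) = 0 := by
  have hba : b ∈ σ.1.erase a := Finset.mem_erase.mpr ⟨hab.ne', hb⟩
  have hab' : a ∈ σ.1.erase b := Finset.mem_erase.mpr ⟨hab.ne, ha⟩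
  simp only [ddTerm]
  rw [dif_pos (show a ∈ σ.1 ∧ b ∈ σ.1.erase a from ⟨ha, hba⟩),
    dif_pos (show b ∈ σ.1 ∧ a ∈ σ.1.erase b from ⟨hb, hab'⟩)]
  apply single_cancel
  have e1 : ((σ.1.erase a).filter fun w => w < b) = (σ.1.filter fun w => w < b).erase a :=
    Finset.filter_erase _ _ _
  have e2 : ((σ.1.erase b).filter fun w => w < a) = σ.1.filter fun w => w < a := by
    rw [Finset.filter_erase]
    exact Finset.erase_eq_of_notMem
      (fun hm => absurd (Finset.mem_filter.mp hm).2 (not_lt.mpr hab.le))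
  have haf : a ∈ σ.1.filter fun w => w < b := Finset.mem_filter.mpr ⟨ha, hab⟩
  have hc1 : ((σ.1.filter fun w => w < b).erase a).card
      = (σ.1.filter fun w => w < b).card - 1 := Finset.card_erase_of_mem haf
  obtain ⟨k, hk⟩ : ∃ k, (σ.1.filter fun w => w < b).card = k + 1 :=
    ⟨(σ.1.filter fun w => w < b).card - 1, by
      have : 1 ≤ (σ.1.filter fun w => w < b).card := Finset.card_pos.mpr ⟨a, haf⟩
      omega⟩
  rw [e1, e2, hc1, hk, Nat.add_sub_cancel, smul_smul, smul_smul, ← add_smul,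
    show ((-1 : ℤ) ^ k * (-1) ^ ((σ.1.filter fun w => w < a).card)
      + (-1) ^ ((σ.1.filter fun w => w < a).card) * (-1) ^ (k + 1)) = 0 by
        rw [pow_succ]; ring,
    zero_smul]

theorem ddTerm_add_swap (n : ℕ) (σ : Simp V (n + 2)) (g : G) (p : V × V)
    (h1 : p.1 ∈ σ.1) (h2 : p.2 ∈ σ.1) :
    ddTerm V G n σ g p + ddTerm V G n σ g p.swap = 0 := by
  obtain ⟨a, b⟩ := p
  show ddTerm V G n σ g (a, b) + ddTerm V G n σ g (b, a) = 0
  rcases lt_trichotomy a b with h | h | h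
  · exact ddTerm_cancel V G n σ g h h1 h2
  · subst h
    rw [ddTerm_diag, add_zero]
  · rw [add_comm]
    exact ddTerm_cancel V G n σ g h h2 h1

theorem bdry_bdry_single (n : ℕ) (σ : Simp V (n + 2)) (g : G) :
    bdry V G n (bdry V G (n + 1) (Finsupp.single σ g)) = 0 := by
  have main : ∑ p ∈ σ.1 ×ˢ σ.1, ddTerm V G n σ g p = 0 := by
    refine Finset.sum_involution (fun p _ => p.swap) ?_ ?_ ?_ ?_
    · intro p hp
      rcases Finset.mem_product.mp hp with ⟨hp1, hp2⟩
      exact ddTerm_add_swap V G n σ g p hp1 hp2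
    · intro p hp hne heq
      apply hne
      have hq : p.2 = p.1 := congrArg Prod.fst heq
      obtain ⟨a, b⟩ := p
      simp only at hq
      subst hq
      exact ddTerm_diag V G n σ g _
    · intro p hp
      rcases Finset.mem_product.mp hp with ⟨hp1, hp2⟩
      exact Finset.mem_product.mpr ⟨hp2, hp1⟩
    · intro p hp
      exact Prod.swap_swap p
  rw [bdry_apply_single]
  unfold bdryFun
  rw [map_sum]
  refine Eq.trans ?_ main
  rw [Finset.sum_product,
    ← Finset.sum_attach σ.1 (fun v => ∑ u ∈ σ.1, ddTerm V G n σ g (v, u))]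
  refine Finset.sum_congr rfl fun v _ => ?_
  rw [bdry_apply_single]
  unfold bdryFun
  rw [← Finset.sum_erase σ.1 (f := fun u => ddTerm V G n σ g (v.1, u)) (a := v.1)
      (ddTerm_diag V G n σ g v.1),
    ← Finset.sum_attach (σ.1.erase v.1) (fun u => ddTerm V G n σ g (v.1, u))]
  refine Finset.sum_congr rfl fun u _ => ?_
  unfold ddTerm
  rw [dif_pos (show v.1 ∈ σ.1 ∧ u.1 ∈ σ.1.erase v.1 from ⟨v.2, u.2⟩)]

theorem bdry_bdry (n : ℕ) (c : Ch V G (n + 2)) :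
    bdry V G n (bdry V G (n + 1) c) = 0 := by
  have h : (bdry V G n).comp (bdry V G (n + 1)) = 0 :=
    Finsupp.addHom_ext fun σ g => bdry_bdry_single V G n σ g
  simpa using DFunLike.congr_fun h c

end DD

section Skel

variable (V : Type) [LinearOrder V] (G : Type) [AddCommGroup G]

theorem chainsOn_skel_of_le {W : Type} [LinearOrder W] (H : Set (Finset W)) {k m : ℕ}
    (h : m + 1 ≤ k) : chainsOn W G (skel H k) m = chainsOn W G H m := by
  refine le_antisymm (chainsOn_mono W G (fun σ hσ => hσ.1) m) ?_
  intro c hc σ hσ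
  exact ⟨hc σ hσ, le_trans (le_of_eq σ.2) h⟩

theorem chainsOn_skel_eq_bot {W : Type} [LinearOrder W] (H : Set (Finset W)) {k m : ℕ}
    (h : k < m + 1) : chainsOn W G (skel H k) m = ⊥ := by
  rw [eq_bot_iff]
  intro c hc
  simp only [AddSubgroup.mem_bot]
  ext σ
  by_contra hne
  have hm : σ ∈ c.support := Finsupp.mem_support_iff.mpr (by simpa using hne)
  have h2 := (hc σ hm).2
  rw [σ.2] at h2
  omega

theorem infC_skel_eq (H : Set (Finset V)) {k m : ℕ} (h : m + 1 ≤ k) :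
    InfC (bdry V G) (fun j => chainsOn V G (skel H k) j) m
      = InfC (bdry V G) (fun j => chainsOn V G H j) m := by
  cases m with
  | zero => exact chainsOn_skel_of_le G H h
  | succ j =>
    simp only [InfC]
    rw [chainsOn_skel_of_le G H h, chainsOn_skel_of_le G H (by omega)]

theorem infC_skel_bot (H : Set (Finset V)) {k m : ℕ} (h : k ≤ m) :
    InfC (bdry V G) (fun j => chainsOn V G (skel H k) j) m = ⊥ := by
  cases m with
  | zero => exact chainsOn_skel_eq_bot G H (by omega)
  | succ j =>
    simp only [InfC]
    rw [chainsOn_skel_eq_bot G H (by omega)]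
    exact bot_inf_eq _

theorem infC_le_comap (H : Set (Finset V)) (m : ℕ) :
    InfC (bdry V G) (fun j => chainsOn V G H j) (m + 1) ≤
      (InfC (bdry V G) (fun j => chainsOn V G H j) m).comap (bdry V G m) := by
  intro c hc
  simp only [InfC] at hc
  rw [AddSubgroup.mem_inf] at hc
  obtain ⟨hc1, hc2⟩ := hc
  rw [AddSubgroup.mem_comap] at hc2 ⊢
  cases m with
  | zero => exact hc2
  | succ j =>
    simp only [InfC]
    rw [AddSubgroup.mem_inf]
    refine ⟨hc2, ?_⟩
    rw [AddSubgroup.mem_comap, bdry_bdry]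
    exact zero_mem _

end Skel

/-- For any hypergraph `H` and any `i, n ≥ 0`, the relative embedded
homology of the skeleton pair `(H^n, H^{n-1})` vanishes in degrees `i ≠ n`, and in
degree `n` it is isomorphic to `Inf_n(H)`. -/
theorem skeleton_pair_relative_homology
    (V : Type) [LinearOrder V] [Fintype V] (G : Type) [AddCommGroup G]
    (H : Set (Finset V)) (hH : ∀ σ ∈ H, σ.Nonempty) (i n : ℕ) :
    (i ≠ n → Subsingleton
        (relH (bdry V G) (InfC (bdry V G) fun m => chainsOn V G (skel H (n + 1)) m)
          (InfC (bdry V G) fun m => chainsOn V G (skel H n) m) i)) ∧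
    Nonempty
      ((relH (bdry V G) (InfC (bdry V G) fun m => chainsOn V G (skel H (n + 1)) m)
          (InfC (bdry V G) fun m => chainsOn V G (skel H n) m) n) ≃+
        InfC (bdry V G) (fun m => chainsOn V G H m) n) := by
  constructor
  · intro hne
    have hZB : (relB (bdry V G) (InfC (bdry V G) fun m => chainsOn V G (skel H (n + 1)) m)
          (InfC (bdry V G) fun m => chainsOn V G (skel H n) m) i).addSubgroupOf
        (relZ (bdry V G) (InfC (bdry V G) fun m => chainsOn V G (skel H (n + 1)) m)
          (InfC (bdry V G) fun m => chainsOn V G (skel H n) m) i) = ⊤ := by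
      rw [AddSubgroup.addSubgroupOf_eq_top]
      rcases lt_or_gt_of_ne hne with hlt | hgt
      · have hZK : relZ (bdry V G) (InfC (bdry V G) fun m => chainsOn V G (skel H (n + 1)) m)
            (InfC (bdry V G) fun m => chainsOn V G (skel H n) m) i ≤
            InfC (bdry V G) (fun m => chainsOn V G (skel H (n + 1)) m) i := by
          cases i with
          | zero => exact le_rfl
          | succ j => simp only [relZ]; exact inf_le_left
        have hKL : InfC (bdry V G) (fun m => chainsOn V G (skel H (n + 1)) m) i
            = InfC (bdry V G) (fun m => chainsOn V G (skel H n) m) i := by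
          rw [infC_skel_eq V G H (by omega), infC_skel_eq V G H (by omega)]
        unfold relB
        exact le_inf ((hZK.trans hKL.le).trans le_sup_right) le_rfl
      · have hbot : relZ (bdry V G) (InfC (bdry V G) fun m => chainsOn V G (skel H (n + 1)) m)
            (InfC (bdry V G) fun m => chainsOn V G (skel H n) m) i ≤ ⊥ := by
          obtain ⟨j, rfl⟩ : ∃ j, i = j + 1 := ⟨i - 1, by omega⟩
          simp only [relZ]
          refine le_trans inf_le_left ?_
          rw [infC_skel_bot V G H (by omega)]
        intro z hz
        rw [AddSubgroup.mem_bot.mp (hbot hz)]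
        exact zero_mem _
    unfold relH
    rw [hZB]
    exact QuotientAddGroup.subsingleton_quotient_top
  · have hB : relB (bdry V G) (InfC (bdry V G) fun m => chainsOn V G (skel H (n + 1)) m)
        (InfC (bdry V G) fun m => chainsOn V G (skel H n) m) n = ⊥ := by
      unfold relB
      rw [infC_skel_bot V G H (le_refl (n + 1)), infC_skel_bot V G H (le_refl n)]
      simp
    have hZ : relZ (bdry V G) (InfC (bdry V G) fun m => chainsOn V G (skel H (n + 1)) m)
        (InfC (bdry V G) fun m => chainsOn V G (skel H n) m) n
        = InfC (bdry V G) (fun m => chainsOn V G H m) n := by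
      cases n with
      | zero => exact infC_skel_eq V G H (le_refl 1)
      | succ m =>
        simp only [relZ]
        rw [infC_skel_eq V G H (by omega), infC_skel_eq V G H (by omega)]
        exact inf_eq_left.mpr (infC_le_comap V G H m)
    have hB' : (relB (bdry V G) (InfC (bdry V G) fun m => chainsOn V G (skel H (n + 1)) m)
          (InfC (bdry V G) fun m => chainsOn V G (skel H n) m) n).addSubgroupOf
        (relZ (bdry V G) (InfC (bdry V G) fun m => chainsOn V G (skel H (n + 1)) m)
          (InfC (bdry V G) fun m => chainsOn V G (skel H n) m) n) = ⊥ := by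
      rw [hB]
      exact AddSubgroup.bot_addSubgroupOf _
    exact ⟨((QuotientAddGroup.quotientAddEquivOfEq hB').trans
      QuotientAddGroup.quotientBot).trans (AddEquiv.addSubgroupCongr hZ)⟩
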